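/- arXiv:2601.13602 — 4 statements merged into one kernel-verified Lean document; each statement's English description precedes it below -/
import Mathlib

section
/- Let μ > 0. For every continuously differentiable function η : [0,1) → ℝ with η(0) = 0 and η(t) → +∞ as t → 1⁻, the improper integral ∫₀¹ η'(t)² / (μ + η(t)²)² dt is at least π²/(4μ). Moreover, equality holds if and only if η(t) = √μ · tan((π/2)·t) for all t ∈ [0,1). -/
open MeasureTheory Real Set Filter

lemma cos_pos_aux {t : ℝ} (ht : t ∈ Set.Ico (0:ℝ) 1) : 0 < Real.cos (Real.pi/2*t) := by
  apply Real.cos_pos_of_mem_Ioo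
  constructor
  · nlinarith [Real.pi_pos, ht.1, ht.2]
  · nlinarith [Real.pi_pos, ht.1, ht.2]

lemma tan_deriv_at (μ : ℝ) {t : ℝ} (ht : t ∈ Set.Ico (0:ℝ) 1) :
    HasDerivAt (fun s => Real.sqrt μ * Real.tan (Real.pi/2 * s))
      (Real.sqrt μ * (Real.pi/2 * (1/Real.cos (Real.pi/2*t)^2))) t := by
  have h1 : HasDerivAt (fun s : ℝ => Real.pi/2 * s) (Real.pi/2) t := by
    simpa using (hasDerivAt_id t).const_mul (Real.pi/2)
  have h2 : HasDerivAt Real.tan (1/Real.cos (Real.pi/2*t)^2) (Real.pi/2*t) :=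
    Real.hasDerivAt_tan (cos_pos_aux ht).ne'
  have h3 := (h2.comp t h1)
  have h4 : HasDerivAt (fun s => Real.tan (Real.pi/2 * s))
      (1/Real.cos (Real.pi/2*t)^2 * (Real.pi/2)) t := h3
  simpa [mul_comm, mul_assoc, mul_left_comm] using h4.const_mul (Real.sqrt μ)

lemma tanlaw_integrand (μ : ℝ) (hμ : 0 < μ) (η : ℝ → ℝ)
    (htan : ∀ t ∈ Set.Ico (0:ℝ) 1, η t = Real.sqrt μ * Real.tan (Real.pi/2 * t)) :
    ∀ t ∈ Set.Ico (0:ℝ) 1,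
      (derivWithin η (Set.Ico 0 1) t)^2/(μ + η t^2)^2 = Real.pi^2/(4*μ) := by
  intro t ht
  have hc2 : Real.sqrt μ ^ 2 = μ := Real.sq_sqrt hμ.le
  have hcos := cos_pos_aux ht
  have hD : derivWithin η (Set.Ico 0 1) t
      = Real.sqrt μ * (Real.pi/2 * (1/Real.cos (Real.pi/2*t)^2)) := by
    have h := ((tan_deriv_at μ ht).hasDerivWithinAt (s := Set.Ico 0 1)).congr
      (fun x hx => htan x hx) (htan t ht)
    exact h.derivWithin (uniqueDiffOn_Ico 0 1 t ht)
  have hη : η t = Real.sqrt μ * Real.tan (Real.pi/2 * t) := htan t ht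
  have htan_sq : 1 + Real.tan (Real.pi/2*t) ^ 2 = 1 / Real.cos (Real.pi/2*t) ^ 2 := by
    rw [one_div, ← Real.inv_one_add_tan_sq hcos.ne', inv_inv]
  rw [hD, hη]
  have hne : Real.cos (Real.pi/2*t) ^ 2 ≠ 0 := by positivity
  have key : μ + (Real.sqrt μ * Real.tan (Real.pi/2 * t))^2
      = μ * (1/Real.cos (Real.pi/2*t)^2) := by
    rw [mul_pow, hc2, ← htan_sq]; ring
  rw [key]
  have h1 : (Real.sqrt μ * (Real.pi/2 * (1/Real.cos (Real.pi/2*t)^2)))^2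
      = μ * (Real.pi^2/4) * (1/Real.cos (Real.pi/2*t)^2)^2 := by
    rw [mul_pow, hc2]; ring
  have h2 : (μ * (1/Real.cos (Real.pi/2*t)^2))^2 = μ^2 * (1/Real.cos (Real.pi/2*t)^2)^2 := by
    ring
  rw [h1, h2]
  have hx : ((1:ℝ)/Real.cos (Real.pi/2*t)^2)^2 ≠ 0 := by positivity
  rw [mul_div_mul_right _ _ hx]
  field_simp


lemma tanlaw_lintegral (μ : ℝ) (hμ : 0 < μ) (η : ℝ → ℝ)
    (hti : ∀ t ∈ Set.Ico (0:ℝ) 1,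
      (derivWithin η (Set.Ico 0 1) t)^2/(μ + η t^2)^2 = Real.pi^2/(4*μ)) :
    (∫⁻ t in Set.Ico (0:ℝ) 1, ENNReal.ofReal
      ((derivWithin η (Set.Ico 0 1) t) ^ 2 / (μ + (η t) ^ 2) ^ 2))
      = ENNReal.ofReal (Real.pi^2/(4*μ)) := by
  rw [setLIntegral_congr_fun (f := fun t => ENNReal.ofReal
      ((derivWithin η (Set.Ico 0 1) t) ^ 2 / (μ + (η t) ^ 2) ^ 2))
      (g := fun _ => ENNReal.ofReal (Real.pi^2/(4*μ))) measurableSet_Ico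
      (fun t ht => by simp only [hti t ht])]
  rw [setLIntegral_const, Real.volume_Ico]
  norm_num

/-- Tangent-law optimality (variance-preserving setting): for every `C¹` schedule
ratio `η` on `[0,1)` with `η(0) = 0` and `η(t) → +∞` as `t → 1⁻`, the (possibly
infinite) integral `∫₀¹ η'²/(μ + η²)² dt` is at least `π²/(4μ)`, with equality
iff `η(t) = √μ·tan((π/2)t)` on `[0,1)`. -/
theorem stmt_9 (μ : ℝ) (hμ : 0 < μ) (η : ℝ → ℝ)
    (hη : ContDiffOn ℝ 1 η (Set.Ico 0 1)) (h0 : η 0 = 0)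
    (hlim : Filter.Tendsto η (nhdsWithin 1 (Set.Iio 1)) Filter.atTop) :
    ENNReal.ofReal (Real.pi ^ 2 / (4 * μ)) ≤
      (∫⁻ t in Set.Ico (0 : ℝ) 1, ENNReal.ofReal
        ((derivWithin η (Set.Ico 0 1) t) ^ 2 / (μ + (η t) ^ 2) ^ 2))
    ∧ ((∫⁻ t in Set.Ico (0 : ℝ) 1, ENNReal.ofReal
          ((derivWithin η (Set.Ico 0 1) t) ^ 2 / (μ + (η t) ^ 2) ^ 2))
        = ENNReal.ofReal (Real.pi ^ 2 / (4 * μ))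
      ↔ ∀ t ∈ Set.Ico (0 : ℝ) 1, η t = Real.sqrt μ * Real.tan (Real.pi / 2 * t)) := by
  have hc0 : 0 < Real.sqrt μ := Real.sqrt_pos.2 hμ
  have hc2 : Real.sqrt μ ^ 2 = μ := Real.sq_sqrt hμ.le
  set c := Real.sqrt μ with hcdef
  set S := Set.Ico (0:ℝ) 1 with hSdef
  have hSmeas : MeasurableSet S := measurableSet_Ico
  set D := fun t => derivWithin η S t with hDdef
  set g := fun t => Real.arctan (η t / c) with hgdef
  set G := fun t => c * D t / (μ + η t ^ 2) with hGdef
  have hden : ∀ t : ℝ, 0 < μ + η t ^ 2 := fun t => by positivity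
  have hηcont : ContinuousOn η S := hη.continuousOn
  have hDcont : ContinuousOn D S :=
    (hη.derivWithin (m := 0) (uniqueDiffOn_Ico 0 1) (by norm_num)).continuousOn
  have hGcont : ContinuousOn G S := by
    apply (continuousOn_const.mul hDcont).div
      (continuousOn_const.add (hηcont.pow 2))
    exact fun t _ => (hden t).ne'
  -- derivative of g within S
  have hgderiv : ∀ t ∈ S, HasDerivWithinAt g (G t) S t := by
    intro t ht
    have hηd : HasDerivWithinAt η (D t) S t :=
      (hη.differentiableOn one_ne_zero t ht).hasDerivWithinAt
    have h1 : HasDerivWithinAt (fun s => η s / c) (D t / c) S t := hηd.div_const c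
    have h2 : HasDerivAt Real.arctan (1/(1+(η t/c)^2)) (η t / c) :=
      Real.hasDerivAt_arctan (η t / c)
    have h3 := h2.comp_hasDerivWithinAt t h1
    have hval : 1/(1+(η t/c)^2) * (D t / c) = G t := by
      rw [hGdef]
      have h4 : 1 + (η t / c)^2 = (μ + η t^2)/c^2 := by
        rw [div_pow]
        field_simp
        linarith [hc2]
      rw [h4]
      field_simp
    rw [← hval]
    exact h3
  -- pointwise rewriting of the integrand
  have hpt : ∀ t ∈ S, D t^2/(μ + η t^2)^2 = (G t)^2 * (1/μ) := by
    intro t ht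
    rw [hGdef]
    simp only [div_pow, mul_pow, hc2]
    field_simp
  -- the total lintegral in terms of I
  have hImeas : AEMeasurable (fun t => ENNReal.ofReal ((G t)^2)) (volume.restrict S) := by
    exact (ENNReal.measurable_ofReal.comp_aemeasurable
      (((hGcont.pow 2)).aemeasurable hSmeas))
  have hlinId : (∫⁻ t in S, ENNReal.ofReal (D t ^ 2 / (μ + (η t) ^ 2) ^ 2))
      = (∫⁻ t in S, ENNReal.ofReal ((G t)^2)) * ENNReal.ofReal (1/μ) := by
    rw [setLIntegral_congr_fun (g := fun t => ENNReal.ofReal ((G t)^2) * ENNReal.ofReal (1/μ))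
        hSmeas (fun t ht => by
          simp only [hpt t ht, ENNReal.ofReal_mul (sq_nonneg (G t))])]
    exact lintegral_mul_const'' _ hImeas
  -- FTC on [0, T]
  have hftc : ∀ T ∈ S, ∫ t in (0:ℝ)..T, G t = g T := by
    intro T hT
    have hsub : Set.Icc (0:ℝ) T ⊆ S := fun x hx => ⟨hx.1, lt_of_le_of_lt hx.2 hT.2⟩
    have hgcont : ContinuousOn g (Set.Icc 0 T) :=
      Real.continuous_arctan.comp_continuousOn ((hηcont.mono hsub).div_const c)
    have hder : ∀ x ∈ Set.Ioo (0:ℝ) T, HasDerivAt g (G x) x := by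
      intro x hx
      have hxS : x ∈ S := ⟨hx.1.le, lt_trans hx.2 hT.2⟩
      exact (hgderiv x hxS).hasDerivAt
        (Filter.mem_of_superset (Ioo_mem_nhds hx.1 (lt_trans hx.2 hT.2)) Ioo_subset_Ico_self)
    have hint : IntervalIntegrable G volume 0 T := by
      apply ContinuousOn.intervalIntegrable
      rw [Set.uIcc_of_le hT.1]
      exact hGcont.mono hsub
    have := intervalIntegral.integral_eq_sub_of_hasDerivAt_of_le hT.1 hgcont hder hint
    rw [this, hgdef]
    simp [h0]
  -- limit of g at 1⁻
  have hglim : Tendsto g (nhdsWithin 1 (Set.Iio 1)) (nhds (Real.pi/2)) := by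
    have h1 : Tendsto (fun t => η t / c) (nhdsWithin 1 (Set.Iio 1)) atTop :=
      hlim.atTop_div_const hc0
    exact (Real.tendsto_arctan_atTop.comp h1).mono_right nhdsWithin_le_nhds
  have htanval : (∀ t ∈ S, η t = c * Real.tan (Real.pi/2*t)) →
      (∫⁻ t in S, ENNReal.ofReal (D t ^ 2 / (μ + (η t) ^ 2) ^ 2))
        = ENNReal.ofReal (Real.pi^2/(4*μ)) := fun htl =>
    tanlaw_lintegral μ hμ η (tanlaw_integrand μ hμ η htl)
  by_cases hfin : (∫⁻ t in S, ENNReal.ofReal ((G t)^2)) = ⊤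
  · have htot : (∫⁻ t in S, ENNReal.ofReal (D t ^ 2 / (μ + (η t) ^ 2) ^ 2)) = ⊤ := by
      rw [hlinId, hfin, ENNReal.top_mul]
      simp only [ne_eq, ENNReal.ofReal_eq_zero, not_le]
      positivity
    refine ⟨htot ▸ le_top, ?_, ?_⟩
    · intro h; rw [htot] at h; exact absurd h.symm ENNReal.ofReal_ne_top
    · intro htl; rw [htanval htl] at htot; exact absurd htot ENNReal.ofReal_ne_top
  · haveI : IsFiniteMeasure (volume.restrict S) := by
      constructor
      rw [Measure.restrict_apply_univ, hSdef, Real.volume_Ico]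
      exact ENNReal.ofReal_lt_top
    have hG2int : Integrable (fun t => (G t)^2) (volume.restrict S) := by
      refine ⟨(hGcont.pow 2).aestronglyMeasurable hSmeas, ?_⟩
      rw [hasFiniteIntegral_iff_ofReal (ae_of_all _ fun t => sq_nonneg _)]
      exact lt_top_iff_ne_top.2 hfin
    have hGint : Integrable G (volume.restrict S) := by
      refine Integrable.mono' ((hG2int.add (integrable_const 1)).div_const 2)
        (hGcont.aestronglyMeasurable hSmeas) (ae_of_all _ fun t => ?_)
      rw [Real.norm_eq_abs]
      simp only [Pi.add_apply]
      nlinarith [sq_nonneg (|G t| - 1), sq_abs (G t)]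
    -- ∫ G over S equals π/2
    have hintG : ∫ t in S, G t = Real.pi/2 := by
      set u : ℕ → ℝ := fun n => 1 - 1/(n+1) with hudef
      have hu0 : ∀ n : ℕ, 0 ≤ u n := by
        intro n
        have h1 : (1:ℝ)/(n+1) ≤ 1 := by
          rw [div_le_one (by positivity)]
          simp
        show (0:ℝ) ≤ 1 - 1/(n+1)
        linarith
      have hu1 : ∀ n : ℕ, u n < 1 := by
        intro n
        have : (0:ℝ) < 1/(n+1) := by positivity
        show (1:ℝ) - 1/(n+1) < 1
        linarith
      have hunion : (⋃ n, Set.Ico (0:ℝ) (u n)) = S := by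
        ext x
        simp only [Set.mem_iUnion, Set.mem_Ico, hSdef]
        constructor
        · rintro ⟨n, hx0, hxn⟩; exact ⟨hx0, lt_of_lt_of_le hxn (hu1 n).le⟩
        · rintro ⟨hx0, hx1⟩
          obtain ⟨n, hn⟩ := exists_nat_one_div_lt (show (0:ℝ) < 1 - x by linarith)
          refine ⟨n, hx0, ?_⟩
          show x < 1 - 1/((n:ℝ)+1)
          linarith
      have hmono : Monotone (fun n : ℕ => Set.Ico (0:ℝ) (u n)) := by
        intro m n hmn
        apply Set.Ico_subset_Ico le_rfl
        show (1:ℝ) - 1/(m+1) ≤ 1 - 1/(n+1)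
        have h2 : (1:ℝ)/(n+1) ≤ 1/(m+1) := by
          apply one_div_le_one_div_of_le (by positivity)
          have := Nat.cast_le (α := ℝ).2 hmn
          linarith
        linarith
      have htend := tendsto_setIntegral_of_monotone (f := G) (μ := volume)
        (fun n : ℕ => measurableSet_Ico) hmono (by rw [hunion]; exact hGint)
      rw [hunion] at htend
      have heq : ∀ n : ℕ, (∫ x in Set.Ico (0:ℝ) (u n), G x) = g (u n) := by
        intro n
        rw [Measure.restrict_congr_set Ico_ae_eq_Ioc,
          ← intervalIntegral.integral_of_le (hu0 n)]
        exact hftc (u n) ⟨hu0 n, hu1 n⟩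
      have hu_tend : Tendsto u atTop (nhdsWithin 1 (Set.Iio 1)) := by
        rw [tendsto_nhdsWithin_iff]
        constructor
        · have := tendsto_one_div_add_atTop_nhds_zero_nat (𝕜 := ℝ)
          have h2 : Tendsto u atTop (nhds (1 - 0)) := tendsto_const_nhds.sub this
          simpa using h2
        · exact Filter.Eventually.of_forall fun n => hu1 n
      have hgu : Tendsto (fun n => g (u n)) atTop (nhds (Real.pi/2)) :=
        hglim.comp hu_tend
      have : Tendsto (fun n : ℕ => ∫ x in Set.Ico (0:ℝ) (u n), G x) atTop
          (nhds (Real.pi/2)) := by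
        simp only [heq]; exact hgu
      exact tendsto_nhds_unique htend this
    set A := ∫ t in S, (G t)^2 with hAdef
    set J := ∫ t in S, (G t - Real.pi/2)^2 with hJdef
    have hAnn : 0 ≤ A := setIntegral_nonneg hSmeas fun t _ => sq_nonneg _
    have hJnn : 0 ≤ J := setIntegral_nonneg hSmeas fun t _ => sq_nonneg _
    have hJint : Integrable (fun t => (G t - Real.pi/2)^2) (volume.restrict S) := by
      have he : (fun t => (G t - Real.pi/2)^2)
          = fun t => (G t^2 - Real.pi * G t) + Real.pi^2/4 := by
        funext t; ring
      rw [he]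
      exact (hG2int.sub (hGint.const_mul Real.pi)).add (integrable_const _)
    have hvolS : (volume.restrict S) Set.univ = 1 := by
      rw [Measure.restrict_apply_univ, hSdef, Real.volume_Ico]
      norm_num
    have hAJ : A = J + Real.pi^2/4 := by
      have he : (fun t => (G t - Real.pi/2)^2)
          = fun t => (G t^2 - Real.pi * G t) + Real.pi^2/4 := by
        funext t; ring
      have h1 : J = ∫ t in S, ((G t^2 - Real.pi * G t) + Real.pi^2/4) := by
        rw [hJdef, he]
      have h2 : (∫ t in S, ((G t^2 - Real.pi * G t) + Real.pi^2/4))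
          = (∫ t in S, (G t^2 - Real.pi * G t)) + ∫ t in S, (Real.pi^2/4 : ℝ) :=
        integral_add (hG2int.sub (hGint.const_mul Real.pi)) (integrable_const _)
      have h3 : (∫ t in S, (G t^2 - Real.pi * G t))
          = A - ∫ t in S, Real.pi * G t := integral_sub hG2int (hGint.const_mul Real.pi)
      have h4 : (∫ t in S, Real.pi * G t) = Real.pi * (Real.pi/2) := by
        rw [integral_const_mul, hintG]
      have h5 : (∫ t in S, (Real.pi^2/4 : ℝ)) = Real.pi^2/4 := by
        rw [integral_const, measureReal_def, hvolS]
        simp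
      rw [h1, h2, h3, h4, h5] at *
      linarith
    have hIA : (∫⁻ t in S, ENNReal.ofReal ((G t)^2)) = ENNReal.ofReal A :=
      (ofReal_integral_eq_lintegral_ofReal hG2int (ae_of_all _ fun t => sq_nonneg _)).symm
    have htot : (∫⁻ t in S, ENNReal.ofReal (D t ^ 2 / (μ + (η t) ^ 2) ^ 2))
        = ENNReal.ofReal (A * (1/μ)) := by
      rw [hlinId, hIA, ← ENNReal.ofReal_mul hAnn]
    have hμinv : (0:ℝ) < 1/μ := by positivity
    refine ⟨?_, ?_, ?_⟩
    · rw [htot]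
      apply ENNReal.ofReal_le_ofReal
      have he : Real.pi^2/(4*μ) = (Real.pi^2/4) * (1/μ) := by
        field_simp
      rw [he, hAJ]
      apply mul_le_mul_of_nonneg_right _ hμinv.le
      linarith
    · intro heq
      rw [htot] at heq
      have h1 : A * (1/μ) = Real.pi^2/(4*μ) :=
        (ENNReal.ofReal_eq_ofReal_iff (by positivity) (by positivity)).1 heq
      have hA4 : A = Real.pi^2/4 := by
        field_simp at h1
        have h1' : (A*4)*μ = (Real.pi^2)*μ := by linear_combination μ * h1
        have := mul_right_cancel₀ hμ.ne' h1'
        linarith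
      have hJ0 : J = 0 := by linarith
      have hae : (fun t => (G t - Real.pi/2)^2) =ᵐ[volume.restrict S] 0 :=
        (integral_eq_zero_iff_of_nonneg_ae (ae_of_all _ fun t => sq_nonneg _) hJint).1 hJ0
      have haeG : ∀ᵐ t ∂volume, t ∈ S → G t = Real.pi/2 := by
        apply (ae_restrict_iff' hSmeas).1
        filter_upwards [hae] with t ht
        have h2 : (G t - Real.pi/2)^2 = 0 := ht
        have h3 : G t - Real.pi/2 = 0 :=
          (pow_eq_zero_iff (by norm_num : (2:ℕ) ≠ 0)).1 h2
        linarith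
      intro T hT
      have hgT : g T = Real.pi/2 * T := by
        rw [← hftc T hT]
        rw [intervalIntegral.integral_congr_ae (g := fun _ => Real.pi/2)
          (by
            filter_upwards [haeG] with x hx hxI
            apply hx
            rw [Set.uIoc_of_le hT.1] at hxI
            exact ⟨hxI.1.le, lt_of_le_of_lt hxI.2 hT.2⟩)]
        rw [intervalIntegral.integral_const, smul_eq_mul]
        ring
      have h5 : η T / c = Real.tan (Real.pi/2 * T) := by
        have h6 : Real.arctan (η T / c) = Real.pi/2 * T := hgT
        rw [← h6, Real.tan_arctan]
      rw [div_eq_iff hc0.ne'] at h5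
      rw [h5]; ring
    · intro htl
      exact htanval htl
end

section
/- Let μ > 0 and σmax > 0. For every continuously differentiable function η : [0,1] → ℝ with η(0) = 0 and η(1) = σmax, the integral ∫₀¹ η'(t)² / (μ + η(t)²)² dt is at least (1/μ)·arctan(σmax/√μ)². Moreover, equality holds if and only if η(t) = √μ · tan( t · arctan(σmax/√μ) ) for all t ∈ [0,1]. -/
open Real Set MeasureTheory intervalIntegral

/-- Tangent-law optimality (variance-exploding setting): for every `C¹` schedule
ratio `η` on `[0,1]` with `η(0) = 0` and `η(1) = σmax`, one has
`∫₀¹ η'²/(μ + η²)² dt ≥ (1/μ)·arctan(σmax/√μ)²`, with equality iff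
`η(t) = √μ·tan(t·arctan(σmax/√μ))` on `[0,1]`. -/
theorem stmt_11 (μ σmax : ℝ) (hμ : 0 < μ) (hσmax : 0 < σmax) (η : ℝ → ℝ)
    (hη : ContDiffOn ℝ 1 η (Set.Icc 0 1)) (h0 : η 0 = 0) (h1 : η 1 = σmax) :
    (1 / μ) * (Real.arctan (σmax / Real.sqrt μ)) ^ 2 ≤
      ∫ t in (0 : ℝ)..1, (derivWithin η (Set.Icc 0 1) t) ^ 2 / (μ + (η t) ^ 2) ^ 2
    ∧ ((∫ t in (0 : ℝ)..1, (derivWithin η (Set.Icc 0 1) t) ^ 2 / (μ + (η t) ^ 2) ^ 2)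
        = (1 / μ) * (Real.arctan (σmax / Real.sqrt μ)) ^ 2
      ↔ ∀ t ∈ Set.Icc (0 : ℝ) 1,
          η t = Real.sqrt μ * Real.tan (t * Real.arctan (σmax / Real.sqrt μ))) := by
  have hs : (0:ℝ) < Real.sqrt μ := Real.sqrt_pos.mpr hμ
  set s := Real.sqrt μ with hs_def
  have hs2 : s ^ 2 = μ := Real.sq_sqrt hμ.le
  set A := Real.arctan (σmax / s) with hA_def
  have hApos : 0 < A := by
    have := Real.arctan_strictMono (show (0:ℝ) < σmax / s by positivity)
    exact lt_of_eq_of_lt Real.arctan_zero.symm this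
  have hAlt : A < π / 2 := Real.arctan_lt_pi_div_two _
  have hI : UniqueDiffOn ℝ (Set.Icc (0:ℝ) 1) := uniqueDiffOn_Icc one_pos
  set f' : ℝ → ℝ := fun t => derivWithin η (Set.Icc 0 1) t with hf'def
  have hηdiff : ∀ t ∈ Set.Icc (0:ℝ) 1, HasDerivWithinAt η (f' t) (Set.Icc 0 1) t := fun t ht =>
    ((hη.differentiableOn one_ne_zero) t ht).hasDerivWithinAt
  have hηc : ContinuousOn η (Set.Icc 0 1) := hη.continuousOn
  have hf'c : ContinuousOn f' (Set.Icc 0 1) := hη.continuousOn_derivWithin hI le_rfl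
  set g : ℝ → ℝ := fun t => Real.arctan (η t / s) with hg_def
  set g' : ℝ → ℝ := fun t => s * f' t / (μ + η t ^ 2) with hg'def
  have hden : ∀ t, 0 < μ + η t ^ 2 := fun t => by positivity
  have hgd : ∀ t ∈ Set.Icc (0:ℝ) 1, HasDerivWithinAt g (g' t) (Set.Icc 0 1) t := by
    intro t ht
    have h1 : HasDerivWithinAt (fun u => η u / s) (f' t / s) (Set.Icc 0 1) t :=
      (hηdiff t ht).div_const s
    have h2 := (Real.hasDerivAt_arctan (η t / s)).comp_hasDerivWithinAt t h1
    refine h2.congr_deriv ?_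
    have : (1:ℝ) + (η t / s) ^ 2 = (μ + η t ^ 2) / s ^ 2 := by
      field_simp; nlinarith [hs2]
    rw [this, one_div_div, div_mul_div_comm, sq]
    rw [hg'def]
    field_simp [hs.ne', (hden t).ne']
  have hgc : ContinuousOn g (Set.Icc 0 1) :=
    Real.continuous_arctan.comp_continuousOn (hηc.div_const s)
  have hg'c : ContinuousOn g' (Set.Icc 0 1) :=
    (continuousOn_const.mul hf'c).div (continuousOn_const.add (hηc.pow 2))
      (fun t _ => (hden t).ne')
  have huIcc : Set.uIcc (0:ℝ) 1 = Set.Icc 0 1 := Set.uIcc_of_le zero_le_one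
  have hg'int : IntervalIntegrable g' volume 0 1 :=
    (hg'c.mono (by rw [huIcc])).intervalIntegrable
  -- FTC on [0, t] for t in [0,1]
  have hFTCt : ∀ t ∈ Set.Icc (0:ℝ) 1, ∫ u in (0:ℝ)..t, g' u = g t - g 0 := by
    intro t ht
    refine intervalIntegral.integral_eq_sub_of_hasDeriv_right_of_le ht.1
      (hgc.mono (Set.Icc_subset_Icc le_rfl ht.2)) (fun x hx => ?_)
      (hg'int.mono_set (by rw [huIcc, Set.uIcc_of_le ht.1]; exact Set.Icc_subset_Icc le_rfl ht.2))
    have hxI : x ∈ Set.Icc (0:ℝ) 1 := ⟨hx.1.le, hx.2.le.trans ht.2⟩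
    exact ((hgd x hxI).hasDerivAt (Icc_mem_nhds hx.1 (lt_of_lt_of_le hx.2 ht.2))).hasDerivWithinAt
  have hg0 : g 0 = 0 := by simp [hg_def, h0]
  have hg1 : g 1 = A := by simp [hg_def, h1, hA_def]
  have hFTC : ∫ u in (0:ℝ)..1, g' u = A := by
    rw [hFTCt 1 (by norm_num), hg0, hg1, sub_zero]
  have hEint : IntervalIntegrable (fun t => f' t ^ 2 / (μ + η t ^ 2) ^ 2) volume 0 1 := by
    apply ContinuousOn.intervalIntegrable
    rw [huIcc]
    exact (hf'c.pow 2).div ((continuousOn_const.add (hηc.pow 2)).pow 2)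
      (fun t _ => by positivity)
  have hg'2int : IntervalIntegrable (fun t => g' t ^ 2) volume 0 1 :=
    ((hg'c.pow 2).mono (by rw [huIcc])).intervalIntegrable
  have hQint : IntervalIntegrable (fun t => (g' t - A) ^ 2) volume 0 1 :=
    (((hg'c.sub continuousOn_const).pow 2).mono (by rw [huIcc])).intervalIntegrable
  set E := ∫ t in (0:ℝ)..1, f' t ^ 2 / (μ + η t ^ 2) ^ 2 with hEdef
  have hintg2 : ∫ t in (0:ℝ)..1, g' t ^ 2 = μ * E := by
    rw [hEdef, ← intervalIntegral.integral_const_mul]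
    refine intervalIntegral.integral_congr (fun t ht => ?_)
    rw [huIcc] at ht
    simp only [hg'def, div_pow, mul_pow, hs2, mul_div_assoc]
  have hQ : ∫ t in (0:ℝ)..1, (g' t - A) ^ 2 = μ * E - A ^ 2 := by
    have hexp : ∀ t : ℝ, (g' t - A) ^ 2 = g' t ^ 2 - 2 * A * g' t + A ^ 2 := fun t => by ring
    simp_rw [hexp]
    rw [intervalIntegral.integral_add (hg'2int.sub ((hg'int.const_mul _)))
        intervalIntegrable_const,
      intervalIntegral.integral_sub hg'2int (hg'int.const_mul _),
      intervalIntegral.integral_const_mul, hFTC, hintg2, intervalIntegral.integral_const]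
    simp only [smul_eq_mul, one_mul]
    ring
  have hQnonneg : 0 ≤ ∫ t in (0:ℝ)..1, (g' t - A) ^ 2 :=
    intervalIntegral.integral_nonneg zero_le_one (fun u _ => sq_nonneg _)
  have hineq : (1 / μ) * A ^ 2 ≤ E := by
    rw [one_div, inv_mul_le_iff₀ hμ]
    linarith
  refine ⟨hineq, ?_, ?_⟩
  · -- equality implies formula
    intro hEeq t ht
    have hQzero : ∫ u in (0:ℝ)..1, (g' u - A) ^ 2 = 0 := by
      rw [hQ, hEeq]; field_simp; ring
    have hae : (fun u => (g' u - A) ^ 2) =ᵐ[volume.restrict (Set.Ioc (0:ℝ) 1)] 0 := by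
      have := (intervalIntegral.integral_eq_zero_iff_of_nonneg_ae ?_ hQint).mp hQzero
      · simpa using this
      · filter_upwards with u using sq_nonneg _
    have hae' : (fun u => (g' u - A) ^ 2) =ᵐ[volume.restrict (Set.Icc (0:ℝ) 1)] 0 := by
      rwa [Measure.restrict_congr_set Ioc_ae_eq_Icc] at hae
    have hEqOn : Set.EqOn (fun u => (g' u - A) ^ 2) 0 (Set.Icc 0 1) := by
      apply Measure.eqOn_of_ae_eq hae' (((hg'c.sub continuousOn_const).pow 2)) continuousOn_const
      rw [interior_Icc, closure_Ioo (zero_ne_one)]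
    have hg'A : ∀ u ∈ Set.Icc (0:ℝ) 1, g' u = A := by
      intro u hu
      have h2 : (g' u - A) ^ 2 = 0 := hEqOn hu
      have h3 : g' u - A = 0 := by
        have := sq_eq_zero_iff.mp h2
        exact this
      linarith
    have hgt : g t = t * A := by
      have h1' : ∫ u in (0:ℝ)..t, g' u = t * A := by
        rw [intervalIntegral.integral_congr (g := fun _ => A)
          (fun u hu => hg'A u (by
            rw [Set.uIcc_of_le ht.1] at hu
            exact ⟨hu.1, hu.2.trans ht.2⟩))]
        simp [mul_comm]
      rw [hFTCt t ht, hg0, sub_zero] at h1'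
      exact h1'
    have : Real.tan (Real.arctan (η t / s)) = Real.tan (t * A) := by
      rw [show Real.arctan (η t / s) = g t from rfl, hgt]
    rw [Real.tan_arctan] at this
    rw [hA_def] at this ⊢
    field_simp at this
    linarith [this]
  · -- formula implies equality
    intro hF
    have hcos : ∀ t ∈ Set.Icc (0:ℝ) 1, Real.cos (t * A) ≠ 0 := by
      intro t ht
      have h1' : 0 ≤ t * A := mul_nonneg ht.1 hApos.le
      have h2' : t * A < π / 2 := lt_of_le_of_lt
        (mul_le_of_le_one_left hApos.le ht.2) hAlt
      exact (Real.cos_pos_of_mem_Ioo ⟨by linarith [Real.pi_pos], h2'⟩).ne'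
    have hconst : Set.EqOn (fun t => f' t ^ 2 / (μ + η t ^ 2) ^ 2)
        (fun _ => (1 / μ) * A ^ 2) (Set.Icc 0 1) := by
      intro t ht
      have hc := hcos t ht
      have hFd : HasDerivAt (fun u => s * Real.tan (u * A)) (s * (1 / Real.cos (t * A) ^ 2 * A)) t := by
        have h1' : HasDerivAt (fun u : ℝ => u * A) A t := hasDerivAt_mul_const A
        exact ((Real.hasDerivAt_tan hc).comp t h1').const_mul s
      have hfd : f' t = s * (1 / Real.cos (t * A) ^ 2 * A) := by
        have hcongr : derivWithin η (Set.Icc 0 1) t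
            = derivWithin (fun u => s * Real.tan (u * A)) (Set.Icc 0 1) t :=
          derivWithin_congr (fun u hu => hF u hu) (hF t ht)
        show derivWithin η (Set.Icc 0 1) t = _
        rw [hcongr, hFd.hasDerivWithinAt.derivWithin (hI t ht)]
      have hηt : η t = s * Real.tan (t * A) := hF t ht
      have h1p : 1 + Real.tan (t * A) ^ 2 = 1 / Real.cos (t * A) ^ 2 := by
        rw [one_div, ← Real.inv_one_add_tan_sq hc, inv_inv]
      have hdenval : μ + η t ^ 2 = μ / Real.cos (t * A) ^ 2 := by
        rw [hηt, mul_pow, hs2]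
        rw [show μ * Real.tan (t * A) ^ 2 = μ * (1 + Real.tan (t * A) ^ 2) - μ by ring, h1p]
        field_simp
        ring
      simp only [hfd, hdenval]
      field_simp
      exact hs2
    rw [hEdef, intervalIntegral.integral_congr (fun t ht => hconst (huIcc ▸ ht))]
    simp
end

section
/- Let μ > 0 and γ > 0, and let η_γ : [0,1) → ℝ be given by η_γ(t) = √γ · tan((π/2)·t). Then the improper integral satisfies (μ/2) · ∫₀¹ η_γ'(t)² / (μ + η_γ(t)²)² dt = (π²/16) · ( √(μ/γ) + √(γ/μ) ). Equivalently, the leading-order error coefficient of the parameterized tangent-law schedule is E¹(γ) = −(π²/16)·( √(μ/γ) + √(γ/μ) ). -/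
open Filter

/-- For the parameterized tangent-law schedule `η_γ(t) = √γ·tan((π/2)t)`, the
improper integral satisfies
`(μ/2)·∫₀¹ η_γ'²/(μ + η_γ²)² dt = (π²/16)·(√(μ/γ) + √(γ/μ))`; equivalently the
leading-order error coefficient is `E¹(γ) = −(π²/16)·(√(μ/γ) + √(γ/μ))`. -/
theorem stmt_12 (μ γ : ℝ) (hμ : 0 < μ) (hγ : 0 < γ) (η : ℝ → ℝ)
    (hη : ∀ t, η t = Real.sqrt γ * Real.tan (Real.pi / 2 * t)) :
    Tendsto (fun T : ℝ => (μ / 2) * ∫ t in (0 : ℝ)..T,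
        (deriv η t) ^ 2 / (μ + (η t) ^ 2) ^ 2)
      (nhdsWithin 1 (Set.Iio 1))
      (nhds ((Real.pi ^ 2 / 16) * (Real.sqrt (μ / γ) + Real.sqrt (γ / μ)))) := by
  have hπ : (0:ℝ) < Real.pi := Real.pi_pos
  set s : ℝ := Real.pi / 2 with hs
  have hs0 : 0 < s := by positivity
  set p : ℝ := Real.sqrt μ with hpdef
  set q : ℝ := Real.sqrt γ with hqdef
  have hp : 0 < p := Real.sqrt_pos.2 hμ
  have hq : 0 < q := Real.sqrt_pos.2 hγ
  have hp2 : p ^ 2 = μ := Real.sq_sqrt hμ.le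
  have hq2 : q ^ 2 = γ := Real.sq_sqrt hγ.le
  set a : ℝ := s * (p ^ 2 + q ^ 2) / (2 * p ^ 3 * q) with hadef
  set b : ℝ := s * (q ^ 2 - p ^ 2) / (2 * p ^ 2) with hbdef
  set F : ℝ → ℝ := fun t => a * Real.arctan (q / p * Real.tan (s * t)) +
      b * (Real.tan (s * t) / (p ^ 2 + q ^ 2 * Real.tan (s * t) ^ 2)) with hFdef
  -- cosine is positive on [0,1)
  have hcos : ∀ t : ℝ, 0 ≤ t → t < 1 → 0 < Real.cos (s * t) := by
    intro t h0 h1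
    apply Real.cos_pos_of_mem_Ioo
    constructor
    · nlinarith
    · have : s * t < s * 1 := by nlinarith
      simpa [hs] using this
  -- derivative of η
  have hηd : ∀ t : ℝ, Real.cos (s * t) ≠ 0 →
      HasDerivAt η (q * (1 / Real.cos (s * t) ^ 2 * s)) t := by
    intro t hct
    have hfun : η = fun t => q * Real.tan (s * t) := funext fun t => hη t
    rw [hfun]
    have hlin : HasDerivAt (fun x : ℝ => s * x) s t := by
      simpa using (hasDerivAt_id t).const_mul s
    exact ((Real.hasDerivAt_tan hct).comp t hlin).const_mul q
  -- derivative of F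
  have hFd : ∀ t : ℝ, 0 ≤ t → t < 1 →
      HasDerivAt F ((deriv η t) ^ 2 / (μ + (η t) ^ 2) ^ 2) t := by
    intro t h0 h1
    have hct : Real.cos (s * t) ≠ 0 := (hcos t h0 h1).ne'
    have hlin : HasDerivAt (fun x : ℝ => s * x) s t := by
      simpa using (hasDerivAt_id t).const_mul s
    have htan : HasDerivAt (fun x => Real.tan (s * x))
        (1 / Real.cos (s * t) ^ 2 * s) t :=
      (Real.hasDerivAt_tan hct).comp t hlin
    have harc : HasDerivAt (fun x => Real.arctan (q / p * Real.tan (s * x)))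
        (1 / (1 + (q / p * Real.tan (s * t)) ^ 2) * (q / p * (1 / Real.cos (s * t) ^ 2 * s))) t :=
      (Real.hasDerivAt_arctan _).comp t (htan.const_mul (q / p))
    have hdenne : p ^ 2 + q ^ 2 * Real.tan (s * t) ^ 2 ≠ 0 := by positivity
    have hden : HasDerivAt (fun x => p ^ 2 + q ^ 2 * Real.tan (s * x) ^ 2)
        (q ^ 2 * (2 * Real.tan (s * t) ^ 1 * (1 / Real.cos (s * t) ^ 2 * s))) t := by
      have := ((htan.pow 2).const_mul (q ^ 2)).const_add (p ^ 2)
      simpa using this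
    have hquot := htan.div hden hdenne
    have key := (harc.const_mul a).add (hquot.const_mul b)
    refine key.congr_deriv (Eq.symm ?_)
    rw [(hηd t hct).deriv, hη t]
    have hK : (1:ℝ) / Real.cos (s * t) ^ 2 = 1 + Real.tan (s * t) ^ 2 := by
      rw [← Real.inv_one_add_tan_sq hct, one_div, inv_inv]
    rw [hK, ← hp2]
    have h1ne : (1:ℝ) + (q / p * Real.tan (s * t)) ^ 2 ≠ 0 := by positivity
    have hpne : p ≠ 0 := hp.ne'
    have hqne : q ≠ 0 := hq.ne'
    rw [hadef, hbdef]
    field_simp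
    ring
  -- F 0 = 0
  have hF0 : F 0 = 0 := by simp [hFdef]
  -- value of the limit of F at 1⁻
  have htanT : Tendsto (fun T : ℝ => Real.tan (s * T)) (nhdsWithin 1 (Set.Iio 1)) atTop := by
    apply Real.tendsto_tan_pi_div_two.comp
    apply tendsto_nhdsWithin_of_tendsto_nhds_of_eventually_within
    · have : Tendsto (fun T : ℝ => s * T) (nhds 1) (nhds (s * 1)) :=
        (continuous_const.mul continuous_id).tendsto 1
      simpa [hs] using this.mono_left nhdsWithin_le_nhds
    · filter_upwards [self_mem_nhdsWithin] with T hT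
      have : s * T < s * 1 := by
        have := (Set.mem_Iio.1 hT)
        nlinarith
      simpa [hs] using this
  have harcT : Tendsto (fun T : ℝ => Real.arctan (q / p * Real.tan (s * T)))
      (nhdsWithin 1 (Set.Iio 1)) (nhds (Real.pi / 2)) := by
    have h1 : Tendsto (fun T : ℝ => q / p * Real.tan (s * T))
        (nhdsWithin 1 (Set.Iio 1)) atTop :=
      htanT.const_mul_atTop (by positivity)
    exact (Real.tendsto_arctan_atTop.comp h1).mono_right nhdsWithin_le_nhds
  have hquotT : Tendsto (fun T : ℝ => Real.tan (s * T) /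
        (p ^ 2 + q ^ 2 * Real.tan (s * T) ^ 2))
      (nhdsWithin 1 (Set.Iio 1)) (nhds 0) := by
    have hg : Tendsto (fun x : ℝ => x / (p ^ 2 + q ^ 2 * x ^ 2)) atTop (nhds 0) := by
      have h1 : Tendsto (fun x : ℝ => p ^ 2 / x + q ^ 2 * x) atTop atTop := by
        apply Filter.Tendsto.add_atTop
        · exact Tendsto.div_atTop tendsto_const_nhds tendsto_id
        · exact Tendsto.const_mul_atTop (by positivity) tendsto_id
      have h2 := h1.inv_tendsto_atTop
      apply h2.congr'
      filter_upwards [eventually_gt_atTop (0:ℝ)] with x hx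
      have hxne : x ≠ 0 := hx.ne'
      have h3 : p ^ 2 / x + q ^ 2 * x = (p ^ 2 + q ^ 2 * x ^ 2) / x := by
        field_simp
      show (p ^ 2 / x + q ^ 2 * x)⁻¹ = _
      rw [h3, inv_div]
    exact hg.comp htanT
  have hFlim : Tendsto F (nhdsWithin 1 (Set.Iio 1))
      (nhds (a * (Real.pi / 2) + b * 0)) := by
    rw [hFdef]
    exact (harcT.const_mul a).add (hquotT.const_mul b)
  have hmain : Tendsto (fun T : ℝ => (μ / 2) * F T) (nhdsWithin 1 (Set.Iio 1))
      (nhds ((Real.pi ^ 2 / 16) * (Real.sqrt (μ / γ) + Real.sqrt (γ / μ)))) := by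
    have := hFlim.const_mul (μ / 2)
    convert this using 2
    rw [Real.sqrt_div hμ.le, Real.sqrt_div hγ.le, ← hpdef, ← hqdef, ← hp2, hadef, hs]
    have hq2' : Real.sqrt γ = q := rfl
    field_simp
    ring
  apply hmain.congr'
  filter_upwards [Ioo_mem_nhdsLT_of_mem (by norm_num : (1:ℝ) ∈ Set.Ioc (1/2 : ℝ) 1)]
    with T hT
  have hT0 : 0 < T := lt_trans (by norm_num) hT.1
  have hT1 : T < 1 := hT.2
  have huIcc : Set.uIcc 0 T = Set.Icc 0 T := Set.uIcc_of_le hT0.le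
  have hderiv : ∀ t ∈ Set.uIcc 0 T,
      HasDerivAt F ((deriv η t) ^ 2 / (μ + (η t) ^ 2) ^ 2) t := by
    intro t ht
    rw [huIcc] at ht
    exact hFd t ht.1 (lt_of_le_of_lt ht.2 hT1)
  have hcosne : ∀ t ∈ Set.uIcc 0 T, Real.cos (s * t) ≠ 0 := by
    intro t ht
    rw [huIcc] at ht
    exact (hcos t ht.1 (lt_of_le_of_lt ht.2 hT1)).ne'
  have hint : IntervalIntegrable (fun t => (deriv η t) ^ 2 / (μ + (η t) ^ 2) ^ 2)
      MeasureTheory.volume 0 T := by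
    apply ContinuousOn.intervalIntegrable
    have hcs : ContinuousOn (fun t : ℝ => Real.cos (s * t)) (Set.uIcc 0 T) :=
      (Real.continuous_cos.comp (continuous_const.mul continuous_id)).continuousOn
    have hts : ContinuousOn (fun t : ℝ => Real.tan (s * t)) (Set.uIcc 0 T) := by
      apply Real.continuousOn_tan.comp
        ((continuous_const.mul continuous_id).continuousOn)
      intro t ht
      exact hcosne t ht
    have hcont : ContinuousOn
        (fun t : ℝ => (q * (1 / Real.cos (s * t) ^ 2 * s)) ^ 2 /
          (μ + (q * Real.tan (s * t)) ^ 2) ^ 2) (Set.uIcc 0 T) := by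
      apply ContinuousOn.div
      · exact (continuousOn_const.mul ((continuousOn_const.div (hcs.pow 2)
          (fun t ht => pow_ne_zero 2 (hcosne t ht))).mul continuousOn_const)).pow 2
      · exact ((continuousOn_const.add ((continuousOn_const.mul hts).pow 2))).pow 2
      · intro t ht
        have : 0 < μ + (q * Real.tan (s * t)) ^ 2 := by positivity
        positivity
    apply hcont.congr
    intro t ht
    dsimp only
    rw [(hηd t (hcosne t ht)).deriv, hη t]
  rw [intervalIntegral.integral_eq_sub_of_hasDerivAt hderiv hint, hF0, sub_zero]
end

section
/- Let μ > 0, γ > 0 and Θ ∈ (0, π/2). Then (μ·γ·Θ/2) · ∫₀^Θ dx / (μ + (γ − μ)·sin²x)² = (Θ/4) · [ ((μ + γ)/√(μγ)) · arctan( √(γ/μ) · tan Θ ) + ((γ − μ)·tan Θ)/(μ + γ·tan² Θ) ]. -/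
set_option maxHeartbeats 1000000 in
/-- Closed-form evaluation of the leading-order error coefficient (up to sign)
of the parameterized tangent-law schedule:
`(μγΘ/2)·∫₀^Θ dx/(μ + (γ−μ)sin²x)²` equals
`(Θ/4)·[((μ+γ)/√(μγ))·arctan(√(γ/μ)·tanΘ) + ((γ−μ)·tanΘ)/(μ + γ·tan²Θ)]`. -/
theorem stmt_13 (μ γ Θ : ℝ) (hμ : 0 < μ) (hγ : 0 < γ)
    (hΘ0 : 0 < Θ) (hΘ : Θ < Real.pi / 2) :
    (μ * γ * Θ / 2) * ∫ x in (0 : ℝ)..Θ, 1 / (μ + (γ - μ) * (Real.sin x) ^ 2) ^ 2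
      = (Θ / 4) * (((μ + γ) / Real.sqrt (μ * γ))
            * Real.arctan (Real.sqrt (γ / μ) * Real.tan Θ)
          + ((γ - μ) * Real.tan Θ) / (μ + γ * (Real.tan Θ) ^ 2)) := by
  set s := Real.sqrt μ with hs
  set r := Real.sqrt γ with hr
  have hs0 : 0 < s := Real.sqrt_pos.mpr hμ
  have hr0 : 0 < r := Real.sqrt_pos.mpr hγ
  have hs2 : s ^ 2 = μ := Real.sq_sqrt hμ.le
  have hr2 : r ^ 2 = γ := Real.sq_sqrt hγ.le
  have hdiv : Real.sqrt (γ / μ) = r / s := Real.sqrt_div hγ.le μ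
  have hmul : Real.sqrt (μ * γ) = s * r := Real.sqrt_mul hμ.le γ
  -- the antiderivative
  set F : ℝ → ℝ := fun x => (1 / (2 * μ * γ)) *
      (((μ + γ) / (s * r)) * Real.arctan ((r / s) * Real.tan x)
        + (γ - μ) * Real.tan x / (μ + γ * (Real.tan x) ^ 2)) with hF
  have hpos : ∀ x : ℝ, 0 < μ + (γ - μ) * (Real.sin x) ^ 2 := by
    intro x
    rcases le_or_gt μ γ with h | h
    · nlinarith [sq_nonneg (Real.sin x)]
    · nlinarith [Real.sin_sq_le_one x]
  have hderiv : ∀ x ∈ Set.uIcc (0 : ℝ) Θ,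
      HasDerivAt F (1 / (μ + (γ - μ) * (Real.sin x) ^ 2) ^ 2) x := by
    intro x hx
    rw [Set.uIcc_of_le hΘ0.le] at hx
    have hcos : 0 < Real.cos x := by
      apply Real.cos_pos_of_mem_Ioo
      constructor
      · linarith [hx.1, Real.pi_pos]
      · linarith [hx.2]
    have hcne : Real.cos x ≠ 0 := hcos.ne'
    have ht : HasDerivAt Real.tan (1 / Real.cos x ^ 2) x := Real.hasDerivAt_tan hcne
    set t := Real.tan x with htdef
    have hden : 0 < μ + γ * t ^ 2 := by positivity
    have h1 : HasDerivAt (fun y => Real.arctan ((r / s) * Real.tan y))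
        ((1 / (1 + ((r / s) * t) ^ 2)) * ((r / s) * (1 / Real.cos x ^ 2))) x :=
      by have := (Real.hasDerivAt_arctan ((r / s) * t)).comp x (ht.const_mul (r / s)); exact this
    have hnum : HasDerivAt (fun y => (γ - μ) * Real.tan y)
        ((γ - μ) * (1 / Real.cos x ^ 2)) x := ht.const_mul _
    have hden' : HasDerivAt (fun y => μ + γ * (Real.tan y) ^ 2)
        (γ * (2 * t ^ 1 * (1 / Real.cos x ^ 2))) x := ((ht.pow 2).const_mul γ).const_add μ
    have h2 := hnum.div hden' hden.ne'
    have h3 := ((h1.const_mul ((μ + γ) / (s * r))).add h2).const_mul (1 / (2 * μ * γ))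
    refine h3.congr_deriv (Eq.symm ?_)
    set c := Real.cos x with hcdef
    have h1t : (0:ℝ) < 1 + t ^ 2 := by positivity
    have hc2 : c ^ 2 = 1 / (1 + t ^ 2) := by
      have hpyth := Real.sin_sq_add_cos_sq x
      have hsin : Real.sin x = t * c := by
        rw [htdef, Real.tan_eq_sin_div_cos, hcdef]; field_simp
        exact (mul_div_cancel_right₀ (Real.sin x) hcne).symm
      rw [hsin] at hpyth
      field_simp
      nlinarith [hpyth]
    have hsin : Real.sin x = t * c := by
      rw [htdef, Real.tan_eq_sin_div_cos, hcdef]; field_simp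
      exact (mul_div_cancel_right₀ (Real.sin x) hcne).symm
    have hinv : 1 / c ^ 2 = 1 + t ^ 2 := by rw [hc2, one_div_one_div]
    have key : μ + (γ - μ) * (Real.sin x) ^ 2 = (μ + γ * t ^ 2) / (1 + t ^ 2) := by
      rw [hsin, mul_pow, hc2]
      field_simp
      ring
    rw [key, hinv]
    have harc : (0:ℝ) < 1 + ((r / s) * t) ^ 2 := by positivity
    rw [← hs2, ← hr2] at *
    have hd1 : (0:ℝ) < s ^ 2 + r ^ 2 * t ^ 2 := by positivity
    field_simp
    ring
  have hcont : Continuous fun x => 1 / (μ + (γ - μ) * (Real.sin x) ^ 2) ^ 2 := by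
    apply Continuous.div continuous_const (by continuity)
    intro x
    exact pow_ne_zero 2 (hpos x).ne'
  have hint := intervalIntegral.integral_eq_sub_of_hasDerivAt hderiv
    (hcont.intervalIntegrable 0 Θ)
  rw [hint]
  have hF0 : F 0 = 0 := by
    simp [hF, Real.tan_zero, Real.arctan_zero]
  rw [hF0, hF, hdiv, hmul]
  have h2μγ : (2 * μ * γ) ≠ 0 := by positivity
  field_simp
  ring
end
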